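/- Let p ≤ n and let (l_1,...,l_p) be a generic family of linear forms on ℂ^n (i.e., l_1,...,l_p are linearly independent). Then the Bernstein ideal ℬ(l_1,...,l_p) is the principal ideal of ℂ[s_1,...,s_p] generated by ∏_{i=1}^p (s_i + 1). -/

import Mathlib

set_option maxHeartbeats 1000000
set_option synthInstance.maxHeartbeats 400000


open MvPolynomial

namespace Paper

/-- The ring `ℂ[x₁,…,xₙ, s₁,…,s_p, y]`; variable `some (Sum.inl i)` is `xᵢ`,
`some (Sum.inr j)` is `sⱼ`, and `none` is `y`, destined to be `1/(l₁⋯l_p)`. -/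
abbrev A (n p : ℕ) := MvPolynomial (Option (Fin n ⊕ Fin p)) ℂ

variable (n p : ℕ)

noncomputable def xv (i : Fin n) : A n p := X (some (Sum.inl i))
noncomputable def sv (j : Fin p) : A n p := X (some (Sum.inr j))
noncomputable def yv : A n p := X none

/-- A linear form on `ℂⁿ`, given by its coefficients, as a polynomial. -/
noncomputable def lf (c : Fin n → ℂ) : A n p := ∑ i, MvPolynomial.C (c i) * xv n p i

/-- The value of a constant vector field `u` on a linear form with coefficients `c`. -/
noncomputable def ap {n : ℕ} (u c : Fin n → ℂ) : ℂ := ∑ m, u m * c m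

/-- A family of linear forms is generic if every subfamily of `n` of them is
linearly independent. -/
def Generic {n p : ℕ} (l : Fin p → Fin n → ℂ) : Prop :=
  ∀ S : Finset (Fin p), S.card = n → LinearIndependent ℂ (fun i : S => l i.1)

variable (l : Fin p → Fin n → ℂ)

/-- The product `H = l₁ ⋯ l_p`. -/
noncomputable def Hp : A n p := ∏ j, lf n p (l j)

/-- The relation `y·H = 1` presenting the localization `ℂ[x,s][1/H]`. -/
noncomputable def RI : Ideal (A n p) := Ideal.span {yv n p * Hp n p l - 1}

/-- The ring `ℂ[x,s][1/(l₁⋯l_p)]`, i.e. the free module generated by the symbol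
`l₁^{s₁}⋯l_p^{s_p}`. -/
abbrev Rm := A n p ⧸ RI n p l

noncomputable def pr : A n p →ₐ[ℂ] Rm n p l := Ideal.Quotient.mkₐ ℂ _

/-- The constant-coefficient derivation of `A` in the direction `u`, extended to the
localization variable `y` by `∂y = -y²·∂(H)`. -/
noncomputable def d0 (u : Fin n → ℂ) : Derivation ℂ (A n p) (A n p) :=
  mkDerivation ℂ fun v =>
    Option.casesOn v 0 (fun w => Sum.casesOn w (fun m => (MvPolynomial.C (u m) : A n p)) fun _ => 0)

noncomputable def dA (u : Fin n → ℂ) : Derivation ℂ (A n p) (A n p) :=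
  d0 n p u + (-(yv n p) ^ 2 * d0 n p u (Hp n p l)) • pderiv none

lemma pd_none_lf (c : Fin n → ℂ) : pderiv none (lf n p c) = 0 := by
  simp [lf, xv, pderiv_X_of_ne]

lemma pd_none_Hp : pderiv none (Hp n p l) = 0 := by
  have key : ∀ s : Finset (Fin p), pderiv none (∏ j ∈ s, lf n p (l j)) = 0 := by
    intro s
    induction s using Finset.induction_on with
    | empty => simp
    | insert a s h ih =>
        rw [Finset.prod_insert h, Derivation.leibniz]
        simp [ih, pd_none_lf]
  exact key Finset.univ

lemma d0_yv (u : Fin n → ℂ) : d0 n p u (yv n p) = 0 := by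
  simp [d0, yv, mkDerivation_X]

lemma d0_Xnone (u : Fin n → ℂ) : d0 n p u (X none : A n p) = 0 := by
  simp [d0, mkDerivation_X]

lemma dA_gen (u : Fin n → ℂ) :
    dA n p l u (yv n p * Hp n p l - 1) =
      (-(yv n p) * d0 n p u (Hp n p l)) * (yv n p * Hp n p l - 1) := by
  have h1 : dA n p l u (yv n p) = -(yv n p) ^ 2 * d0 n p u (Hp n p l) := by
    simp [dA, d0_Xnone, yv, smul_eq_mul]
  have h2 : dA n p l u (Hp n p l) = d0 n p u (Hp n p l) := by
    simp [dA, pd_none_Hp, smul_eq_mul]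
  have : dA n p l u (yv n p * Hp n p l - 1) =
      yv n p • dA n p l u (Hp n p l) + Hp n p l • dA n p l u (yv n p) := by
    rw [map_sub, Derivation.leibniz]
    simp
  rw [this, h1, h2]
  ring_nf

lemma dA_mem (u : Fin n → ℂ) :
    (RI n p l).restrictScalars ℂ ≤
      ((RI n p l).restrictScalars ℂ).comap ((dA n p l u) : A n p →ₗ[ℂ] A n p) := by
  intro z hz
  simp only [Submodule.restrictScalars_mem] at hz ⊢
  rw [Submodule.mem_comap]
  simp only [Derivation.coeFn_coe]
  rw [RI, Ideal.mem_span_singleton] at hz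
  obtain ⟨t, rfl⟩ := hz
  rw [Derivation.leibniz]
  simp only [Submodule.restrictScalars_mem, smul_eq_mul]
  rw [RI]
  apply Ideal.add_mem
  · exact Ideal.mul_mem_right _ _ (Ideal.subset_span (Set.mem_singleton _))
  · apply Ideal.mul_mem_left
    rw [dA_gen, Ideal.mem_span_singleton]
    exact Dvd.intro_left _ rfl

/-- The (untwisted) action of the derivation in direction `u` on `ℂ[x,s][1/H]`. -/
noncomputable def dR (u : Fin n → ℂ) : Module.End ℂ (Rm n p l) :=
  (Submodule.Quotient.restrictScalarsEquiv ℂ (RI n p l)).toLinearMap ∘ₗ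
    Submodule.mapQ _ _ ((dA n p l u) : A n p →ₗ[ℂ] A n p) (dA_mem n p l u) ∘ₗ
      (Submodule.Quotient.restrictScalarsEquiv ℂ (RI n p l)).symm.toLinearMap

/-- Multiplication by (the image of) a polynomial, as an operator on the symbol module. -/
noncomputable def Mop (a : A n p) : Module.End ℂ (Rm n p l) :=
  LinearMap.mulLeft ℂ (pr n p l a)

/-- The twisted action of `∂_u` on the module generated by `l₁^{s₁}⋯l_p^{s_p}` :
`∂_u(g·l^s) = (∂_u g)·l^s + g·(∑ₖ sₖ u(lₖ)/lₖ)·l^s`. -/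
noncomputable def Top (u : Fin n → ℂ) : Module.End ℂ (Rm n p l) :=
  dR n p l u +
    Mop n p l (∑ k, sv n p k * MvPolynomial.C (ap u (l k)) * yv n p *
      ∏ m ∈ Finset.univ.erase k, lf n p (l m))

/-- The algebra of operators `𝒟 = A_n(ℂ)[s₁,…,s_p]` acting (twistedly) on the module
generated by the symbol `l₁^{s₁}⋯l_p^{s_p}` : it is generated by the multiplications by
the `xᵢ` and the `sⱼ` and by the twisted partial derivatives. -/
noncomputable def Dalg : Subalgebra ℂ (Module.End ℂ (Rm n p l)) :=
  Algebra.adjoin ℂ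
    ((Set.range fun i => Mop n p l (xv n p i)) ∪
     (Set.range fun j => Mop n p l (sv n p j)) ∪
     (Set.range fun i : Fin n => Top n p l (Pi.single i 1)))


lemma pr_apply (a : A n p) : pr n p l a = Ideal.Quotient.mk (RI n p l) a := by
  simp [pr]

lemma pr_surj : Function.Surjective (pr n p l) := by
  intro z
  obtain ⟨a, ha⟩ := Ideal.Quotient.mk_surjective z
  exact ⟨a, by simp [pr_apply, ha]⟩

lemma dR_pr (u : Fin n → ℂ) (a : A n p) :
    dR n p l u (pr n p l a) = pr n p l (dA n p l u a) := by
  have h1 : pr n p l a = (Submodule.Quotient.restrictScalarsEquiv ℂ (RI n p l))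
      (Submodule.Quotient.mk a) := by
    rw [Submodule.Quotient.restrictScalarsEquiv_mk]; rfl
  rw [dR]
  simp only [LinearMap.coe_comp, Function.comp_apply, LinearEquiv.coe_toLinearMap]
  rw [h1, LinearEquiv.symm_apply_apply, Submodule.mapQ_apply,
    Submodule.Quotient.restrictScalarsEquiv_mk]
  rfl

lemma d0_X (u : Fin n → ℂ) (v : Option (Fin n ⊕ Fin p)) :
    d0 n p u (X v) = Option.casesOn v 0
      (fun w => Sum.casesOn w (fun m => (MvPolynomial.C (u m) : A n p)) fun _ => 0) := by
  simp [d0, mkDerivation_X]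

lemma d0_xv (u : Fin n → ℂ) (i : Fin n) : d0 n p u (xv n p i) = C (u i) :=
  d0_X n p u (some (Sum.inl i))

lemma d0_sv (u : Fin n → ℂ) (k : Fin p) : d0 n p u (sv n p k) = 0 :=
  d0_X n p u (some (Sum.inr k))

lemma d0_lf (u : Fin n → ℂ) (c : Fin n → ℂ) :
    d0 n p u (lf n p c) = C (ap u c) := by
  rw [lf, map_sum]
  have : ∀ i, d0 n p u (C (c i) * xv n p i) = C (u i * c i) := by
    intro i
    rw [Derivation.leibniz]
    simp [d0_xv, map_zero, smul_eq_mul, mul_comm]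
  rw [Finset.sum_congr rfl fun i _ => this i, ap, map_sum]

lemma dA_sv (u : Fin n → ℂ) (k : Fin p) : dA n p l u (sv n p k) = 0 := by
  simp [dA, sv, pderiv_X_of_ne, smul_eq_mul, d0_X]

lemma dA_xv (u : Fin n → ℂ) (i : Fin n) : dA n p l u (xv n p i) = C (u i) := by
  simp [dA, xv, pderiv_X_of_ne, smul_eq_mul, d0_X]

lemma dA_lf (u : Fin n → ℂ) (c : Fin n → ℂ) :
    dA n p l u (lf n p c) = C (ap u c) := by
  simp [dA, d0_lf, pd_none_lf, smul_eq_mul]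

lemma Mop_mul (a b : A n p) :
    Mop n p l (a * b) = Mop n p l a * Mop n p l b := by
  rw [Mop, map_mul, LinearMap.mulLeft_mul]; rfl

lemma Mop_apply (a : A n p) (z : Rm n p l) : Mop n p l a z = pr n p l a * z := rfl
lemma ap_single (i : Fin n) (c : Fin n → ℂ) : ap (Pi.single i 1) c = c i := by
  rw [ap, Finset.sum_eq_single i]
  · simp
  · intro m _ hm; simp [Pi.single_apply, hm]
  · simp

lemma d0_prod (u : Fin n → ℂ) (T : Finset (Fin p)) :
    d0 n p u (∏ m ∈ T, lf n p (l m)) =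
      ∑ k ∈ T, C (ap u (l k)) * ∏ m ∈ T.erase k, lf n p (l m) := by
  induction T using Finset.induction_on with
  | empty => simp
  | @insert j T hj ih =>
      rw [Finset.prod_insert hj, Derivation.leibniz, ih, d0_lf, Finset.sum_insert hj,
        Finset.erase_insert hj]
      rw [smul_eq_mul, smul_eq_mul, Finset.mul_sum, add_comm]
      congr 1
      · exact mul_comm _ _
      · apply Finset.sum_congr rfl
        intro k hk
        rw [Finset.erase_insert_of_ne (by rintro rfl; exact hj hk), Finset.prod_insert
          (fun h => hj (Finset.mem_of_mem_erase h))]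
        ring

lemma d0_Hp (u : Fin n → ℂ) :
    d0 n p u (Hp n p l) =
      ∑ k, C (ap u (l k)) * ∏ m ∈ Finset.univ.erase k, lf n p (l m) := by
  rw [Hp, d0_prod]

lemma d0_X_decomp (u : Fin n → ℂ) (v : Option (Fin n ⊕ Fin p)) :
    d0 n p u (X v) = ∑ i, u i • d0 n p (Pi.single i 1) (X v) := by
  match v with
  | some (Sum.inl m) =>
      simp only [d0_X, Pi.single_apply, apply_ite C, map_zero, map_one, smul_ite, smul_zero]
      rw [Finset.sum_ite_eq Finset.univ m]
      simp [MvPolynomial.smul_eq_C_mul]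
  | some (Sum.inr k) => simp [d0_X]
  | none => simp [d0_X]

lemma d0_decomp (u : Fin n → ℂ) (a : A n p) :
    d0 n p u a = ∑ i, u i • d0 n p (Pi.single i 1) a := by
  induction a using MvPolynomial.induction_on with
  | C r => simp
  | add f g hf hg => rw [map_add, hf, hg, ← Finset.sum_add_distrib]
                     exact Finset.sum_congr rfl fun i _ => by rw [map_add, smul_add]
  | mul_X f v hf =>
      rw [Derivation.leibniz, hf, d0_X_decomp]
      simp only [Derivation.leibniz, smul_eq_mul, MvPolynomial.smul_eq_C_mul, Finset.mul_sum]
      rw [← Finset.sum_add_distrib]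
      exact Finset.sum_congr rfl fun i _ => by ring

lemma dA_decomp (u : Fin n → ℂ) (a : A n p) :
    dA n p l u a = ∑ i, u i • dA n p l (Pi.single i 1) a := by
  simp only [dA, Derivation.add_apply, Derivation.smul_apply, smul_add]
  rw [Finset.sum_add_distrib]
  congr 1
  · exact d0_decomp n p u a
  · rw [d0_decomp n p u (Hp n p l)]
    simp only [Finset.sum_smul, smul_eq_mul, MvPolynomial.smul_eq_C_mul, Finset.mul_sum,
      Finset.sum_mul]
    exact Finset.sum_congr rfl fun i _ => by ring
noncomputable def th (u : Fin n → ℂ) : A n p :=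
  ∑ k, sv n p k * MvPolynomial.C (ap u (l k)) * yv n p *
      ∏ m ∈ Finset.univ.erase k, lf n p (l m)

lemma Top_eq (u : Fin n → ℂ) :
    Top n p l u = dR n p l u + Mop n p l (th n p l u) := rfl

lemma Top_pr (u : Fin n → ℂ) (a : A n p) :
    Top n p l u (pr n p l a) = pr n p l (dA n p l u a + th n p l u * a) := by
  rw [Top_eq, LinearMap.add_apply, dR_pr, Mop_apply, ← map_mul, ← map_add]

lemma th_decomp (u : Fin n → ℂ) :
    th n p l u = ∑ i, u i • th n p l (Pi.single i 1) := by
  simp only [th, Finset.smul_sum]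
  rw [Finset.sum_comm]
  apply Finset.sum_congr rfl
  intro k _
  have h : ap u (l k) = ∑ i, u i * ap (Pi.single i 1) (l k) := by
    simp only [ap_single]; rfl
  rw [h, map_sum]
  simp only [map_mul, Finset.sum_mul, Finset.mul_sum, MvPolynomial.smul_eq_C_mul]
  apply Finset.sum_congr rfl
  intro i _
  ring

lemma Top_decomp (u : Fin n → ℂ) :
    Top n p l u = ∑ i, u i • Top n p l (Pi.single i 1) := by
  apply LinearMap.ext
  intro z
  obtain ⟨a, rfl⟩ := pr_surj n p l z
  rw [Top_pr]
  simp only [LinearMap.sum_apply, LinearMap.smul_apply, Top_pr]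
  rw [dA_decomp, th_decomp]
  have h : (∑ i, u i • dA n p l (Pi.single i 1) a) +
      (∑ i, u i • th n p l (Pi.single i 1)) * a =
      ∑ i, u i • (dA n p l (Pi.single i 1) a + th n p l (Pi.single i 1) * a) := by
    rw [Finset.sum_mul, ← Finset.sum_add_distrib]
    exact Finset.sum_congr rfl fun i _ => by rw [smul_add, smul_mul_assoc]
  rw [h, map_sum]
  exact Finset.sum_congr rfl fun i _ => map_smul (pr n p l) _ _

lemma Top_mem (u : Fin n → ℂ) : Top n p l u ∈ Dalg n p l := by
  rw [Top_decomp]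
  apply Subalgebra.sum_mem
  intro i _
  apply Subalgebra.smul_mem
  exact Algebra.subset_adjoin (Set.mem_union_right _ ⟨i, rfl⟩)

lemma Mop_xv_mem (i : Fin n) : Mop n p l (xv n p i) ∈ Dalg n p l :=
  Algebra.subset_adjoin (Set.mem_union_left _ (Set.mem_union_left _ ⟨i, rfl⟩))

lemma Mop_sv_mem (k : Fin p) : Mop n p l (sv n p k) ∈ Dalg n p l :=
  Algebra.subset_adjoin (Set.mem_union_left _ (Set.mem_union_right _ ⟨k, rfl⟩))

lemma Mop_add (a b : A n p) :
    Mop n p l (a + b) = Mop n p l a + Mop n p l b := by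
  apply LinearMap.ext
  intro z
  simp only [Mop_apply, map_add, LinearMap.add_apply, add_mul]

lemma Mop_C (r : ℂ) : Mop n p l (MvPolynomial.C r) = r • (1 : Module.End ℂ (Rm n p l)) := by
  apply LinearMap.ext
  intro z
  rw [Mop_apply]
  have : pr n p l (MvPolynomial.C r) = algebraMap ℂ (Rm n p l) r := by
    rw [← MvPolynomial.algebraMap_eq]
    exact (pr n p l).commutes r
  rw [this, ← Algebra.smul_def]
  rfl

lemma Mop_aeval_mem (c : MvPolynomial (Fin p) ℂ) :
    Mop n p l (aeval (sv n p) c) ∈ Dalg n p l := by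
  induction c using MvPolynomial.induction_on with
  | C r =>
      rw [aeval_C, MvPolynomial.algebraMap_eq, Mop_C]
      exact Subalgebra.smul_mem _ (Subalgebra.one_mem _) r
  | add f g hf hg => rw [map_add, Mop_add]; exact Subalgebra.add_mem _ hf hg
  | mul_X q k hq =>
      rw [map_mul, aeval_X, Mop_mul]
      exact Subalgebra.mul_mem _ hq (Mop_sv_mem n p l k)
/-- Surjectivity of `v ↦ (⟨v, l k⟩)ₖ` for a linearly independent family. -/
lemma exists_dual (hl : LinearIndependent ℂ l) (w : Fin p → ℂ) :
    ∃ v : Fin n → ℂ, ∀ k, ap v (l k) = w k := by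
  classical
  let T : (Fin p → ℂ) →ₗ[ℂ] (Fin n → ℂ) :=
    { toFun := fun c m => ∑ k, c k * l k m
      map_add' := by
        intro a b; funext m
        simp only [Pi.add_apply, add_mul, Finset.sum_add_distrib]
      map_smul' := by
        intro r a; funext m
        simp only [Pi.smul_apply, smul_eq_mul, RingHom.id_apply, Finset.mul_sum]
        exact Finset.sum_congr rfl fun k _ => by ring }
  have hT : ∀ c, T c = fun m => ∑ k, c k * l k m := fun c => rfl
  have hker : LinearMap.ker T = ⊥ := by
    rw [LinearMap.ker_eq_bot']
    intro c hc
    have h0 : ∑ k, c k • l k = 0 := by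
      funext m
      have := congrFun hc m
      simpa [hT, Finset.sum_apply] using this
    funext k
    exact Fintype.linearIndependent_iff.mp hl c h0 k
  obtain ⟨g, hg⟩ := T.exists_leftInverse_of_injective hker
  have hgT : ∀ c, g (T c) = c := fun c => by
    have := congrFun (congrArg (fun (f : (Fin p → ℂ) →ₗ[ℂ] (Fin p → ℂ)) => f.toFun) hg) c
    simpa using this
  have hTl : ∀ k', T (Pi.single k' 1) = l k' := by
    intro k'
    funext m
    simp only [hT]
    rw [Finset.sum_eq_single k']
    · simp
    · intro k _ hk; simp [Pi.single_apply, hk]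
    · simp
  have hlsum : ∀ k', (∑ m, l k' m • (Pi.single m 1 : Fin n → ℂ)) = l k' := by
    intro k'
    funext q
    simp only [Finset.sum_apply, Pi.smul_apply, Pi.single_apply, smul_eq_mul, mul_ite,
      mul_one, mul_zero]
    rw [Finset.sum_ite_eq Finset.univ q]
    simp
  refine ⟨fun m => ∑ k, w k * g (Pi.single m 1) k, ?_⟩
  intro k'
  have h1 : (∑ m, l k' m • g ((Pi.single m 1 : Fin n → ℂ))) = (Pi.single k' 1 : Fin p → ℂ) := by
    have h2 : g (l k') = ∑ m, l k' m • g ((Pi.single m 1 : Fin n → ℂ)) := by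
      conv_lhs => rw [← hlsum k']
      rw [map_sum]
      exact Finset.sum_congr rfl fun m _ => by rw [map_smul]
    rw [← h2, ← hTl k', hgT]
  have key : ∀ k, (∑ m, g (Pi.single m 1) k * l k' m) = (Pi.single k' 1 : Fin p → ℂ) k := by
    intro k
    have := congrFun h1 k
    simpa [Finset.sum_apply, mul_comm] using this
  rw [ap]
  have swap : (∑ m, (∑ k, w k * g (Pi.single m 1) k) * l k' m) =
      ∑ k, w k * (∑ m, g (Pi.single m 1) k * l k' m) := by
    simp only [Finset.sum_mul, Finset.mul_sum]
    rw [Finset.sum_comm]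
    exact Finset.sum_congr rfl fun k _ => Finset.sum_congr rfl fun m _ => by ring
  rw [swap]
  simp only [key, Pi.single_apply, mul_ite, mul_one, mul_zero]
  rw [Finset.sum_ite_eq' Finset.univ k']
  simp

lemma der_prod_sv_zero (D : Derivation ℂ (A n p) (A n p))
    (hD : ∀ k, D (sv n p k) = 0) (S : Finset (Fin p)) :
    D (∏ k ∈ S, (sv n p k + 1)) = 0 := by
  induction S using Finset.induction_on with
  | empty => simp
  | @insert j S hj ih =>
      rw [Finset.prod_insert hj, Derivation.leibniz]
      simp [ih, hD, map_add]

lemma pd_none_lfprod (T : Finset (Fin p)) :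
    pderiv none (∏ m ∈ T, lf n p (l m)) = 0 := by
  induction T using Finset.induction_on with
  | empty => simp
  | @insert j T hj ih =>
      rw [Finset.prod_insert hj, Derivation.leibniz]
      simp [ih, pd_none_lf]

lemma pd_none_sv (k : Fin p) : (pderiv (R := ℂ) none) (sv n p k) = 0 := by
  simp [sv, pderiv_X_of_ne]

lemma pr_yH : pr n p l (yv n p * Hp n p l) = 1 := by
  rw [pr_apply, show (1 : Rm n p l) = Ideal.Quotient.mk (RI n p l) 1 from rfl,
    Ideal.Quotient.eq]
  exact Ideal.subset_span rfl

lemma th_dual (j : Fin p) (u : Fin n → ℂ)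
    (hu : ∀ k, ap u (l k) = if k = j then 1 else 0) :
    th n p l u = sv n p j * (yv n p * ∏ m ∈ Finset.univ.erase j, lf n p (l m)) := by
  rw [th]
  rw [Finset.sum_congr rfl (fun k _ => by rw [hu k])]
  simp only [apply_ite MvPolynomial.C, map_one, map_zero, mul_ite, mul_one, mul_zero,
    ite_mul, zero_mul]
  rw [Finset.sum_ite_eq' Finset.univ j]
  simp [mul_assoc]

lemma key_step (j : Fin p) (S : Finset (Fin p)) (hj : j ∉ S) (u : Fin n → ℂ)
    (hu : ∀ k, ap u (l k) = if k = j then 1 else 0) :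
    Top n p l u (pr n p l ((∏ k ∈ S, (sv n p k + 1)) * ∏ m ∈ Sᶜ, lf n p (l m))) =
      pr n p l ((∏ k ∈ insert j S, (sv n p k + 1)) *
        ∏ m ∈ (insert j S)ᶜ, lf n p (l m)) := by
  classical
  have hj' : j ∈ Sᶜ := Finset.mem_compl.mpr hj
  have hPc : (∏ m ∈ Sᶜ, lf n p (l m)) =
      lf n p (l j) * ∏ m ∈ Sᶜ.erase j, lf n p (l m) :=
    (Finset.mul_prod_erase _ _ hj').symm
  have hd0c : d0 n p u (∏ k ∈ S, (sv n p k + 1)) = 0 :=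
    der_prod_sv_zero n p (d0 n p u) (d0_sv n p u) S
  have hpdc : (pderiv (R := ℂ) none) (∏ k ∈ S, (sv n p k + 1)) = 0 :=
    der_prod_sv_zero n p (pderiv none) (pd_none_sv n p) S
  have hpd : (pderiv (R := ℂ) none)
      ((∏ k ∈ S, (sv n p k + 1)) * ∏ m ∈ Sᶜ, lf n p (l m)) = 0 := by
    rw [Derivation.leibniz, hpdc, pd_none_lfprod]
    simp
  have hdA : dA n p l u ((∏ k ∈ S, (sv n p k + 1)) * ∏ m ∈ Sᶜ, lf n p (l m)) =
      (∏ k ∈ S, (sv n p k + 1)) * ∏ m ∈ Sᶜ.erase j, lf n p (l m) := by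
    have h1 : dA n p l u ((∏ k ∈ S, (sv n p k + 1)) * ∏ m ∈ Sᶜ, lf n p (l m)) =
        d0 n p u ((∏ k ∈ S, (sv n p k + 1)) * ∏ m ∈ Sᶜ, lf n p (l m)) := by
      rw [dA]
      simp only [Derivation.add_apply, Derivation.smul_apply, smul_eq_mul, hpd, mul_zero,
        add_zero]
    rw [h1, Derivation.leibniz, hd0c, smul_zero, add_zero, d0_prod,
      Finset.sum_congr rfl (fun k _ => by rw [hu k])]
    simp only [apply_ite MvPolynomial.C, map_one, map_zero, ite_mul, zero_mul, one_mul]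
    rw [Finset.sum_ite_eq' Sᶜ j, if_pos hj', smul_eq_mul]
  have hth : th n p l u * ((∏ k ∈ S, (sv n p k + 1)) * ∏ m ∈ Sᶜ, lf n p (l m)) =
      sv n p j * (yv n p * Hp n p l) *
        ((∏ k ∈ S, (sv n p k + 1)) * ∏ m ∈ Sᶜ.erase j, lf n p (l m)) := by
    rw [th_dual n p l j u hu, hPc]
    have hH : lf n p (l j) * ∏ m ∈ Finset.univ.erase j, lf n p (l m) = Hp n p l := by
      rw [Hp]
      exact Finset.mul_prod_erase Finset.univ (fun m => lf n p (l m)) (Finset.mem_univ j)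
    rw [← hH]
    ring
  have hB : pr n p l (sv n p j * (yv n p * Hp n p l) *
        ((∏ k ∈ S, (sv n p k + 1)) * ∏ m ∈ Sᶜ.erase j, lf n p (l m))) =
      pr n p l (sv n p j * ((∏ k ∈ S, (sv n p k + 1)) *
        ∏ m ∈ Sᶜ.erase j, lf n p (l m))) := by
    rw [show sv n p j * (yv n p * Hp n p l) *
        ((∏ k ∈ S, (sv n p k + 1)) * ∏ m ∈ Sᶜ.erase j, lf n p (l m)) =
        yv n p * Hp n p l * (sv n p j * ((∏ k ∈ S, (sv n p k + 1)) *
        ∏ m ∈ Sᶜ.erase j, lf n p (l m))) from by ring, map_mul, pr_yH, one_mul]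
  rw [Top_pr, hdA, hth, map_add, hB, ← map_add]
  apply congrArg
  rw [Finset.prod_insert hj, Finset.compl_insert]
  ring

lemma easy_ind (u : Fin p → Fin n → ℂ)
    (hu : ∀ j k, ap (u j) (l k) = if k = j then 1 else 0) (S : Finset (Fin p)) :
    ∃ P ∈ Dalg n p l, P (pr n p l (Hp n p l)) =
      pr n p l ((∏ k ∈ S, (sv n p k + 1)) * ∏ m ∈ Sᶜ, lf n p (l m)) := by
  classical
  induction S using Finset.induction_on with
  | empty =>
      refine ⟨1, Subalgebra.one_mem _, ?_⟩
      rw [Finset.prod_empty, one_mul, Finset.compl_empty, Module.End.one_apply, Hp]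
  | @insert j S hj ih =>
      obtain ⟨P, hP, hPe⟩ := ih
      refine ⟨Top n p l (u j) * P, Subalgebra.mul_mem _ (Top_mem n p l (u j)) hP, ?_⟩
      rw [Module.End.mul_apply, hPe, key_step n p l j S hj (u j) (hu j)]
noncomputable def Sjset (j : Fin p) : Subalgebra ℂ (Rm n p l) :=
  Algebra.adjoin ℂ
    ((Set.range fun i => pr n p l (xv n p i)) ∪
     (Set.range fun k => pr n p l (sv n p k)) ∪
     {pr n p l (yv n p * lf n p (l j))})

def Njset (j : Fin p) : Set (Rm n p l) :=
  { z | ∃ r : Rm n p l, ∃ a, a ∈ Sjset n p l j ∧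
      z = pr n p l (sv n p j + 1) * r + pr n p l (lf n p (l j)) * a }

lemma dA_C (u : Fin n → ℂ) (r : ℂ) : dA n p l u (MvPolynomial.C r) = 0 := by
  rw [show (MvPolynomial.C r : A n p) = algebraMap ℂ (A n p) r from rfl]
  exact Derivation.map_algebraMap _ r

lemma dR_leibniz (u : Fin n → ℂ) (z w : Rm n p l) :
    dR n p l u (z * w) = dR n p l u z * w + z * dR n p l u w := by
  obtain ⟨a, rfl⟩ := pr_surj n p l z
  obtain ⟨bb, rfl⟩ := pr_surj n p l w
  rw [← map_mul, dR_pr, dR_pr, dR_pr, Derivation.leibniz, map_add, smul_eq_mul, smul_eq_mul,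
    map_mul, map_mul]
  ring

lemma pr_lf_mem_Sj (j : Fin p) (c : Fin n → ℂ) :
    pr n p l (lf n p c) ∈ Sjset n p l j := by
  rw [lf, map_sum]
  apply Subalgebra.sum_mem
  intro i _
  rw [map_mul]
  apply Subalgebra.mul_mem
  · have : pr n p l (MvPolynomial.C (c i)) = algebraMap ℂ (Rm n p l) (c i) :=
      (pr n p l).commutes (c i)
    rw [this]; exact Subalgebra.algebraMap_mem _ _
  · exact Algebra.subset_adjoin (Set.mem_union_left _ (Set.mem_union_left _ ⟨i, rfl⟩))

lemma pr_sv_mem_Sj (j k : Fin p) : pr n p l (sv n p k) ∈ Sjset n p l j :=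
  Algebra.subset_adjoin (Set.mem_union_left _ (Set.mem_union_right _ ⟨k, rfl⟩))

lemma pr_ylf_mem_Sj (j : Fin p) :
    pr n p l (yv n p * lf n p (l j)) ∈ Sjset n p l j :=
  Algebra.subset_adjoin (Set.mem_union_right _ rfl)

lemma pr_lfprod_mem_Sj (j : Fin p) (T : Finset (Fin p)) :
    pr n p l (∏ m ∈ T, lf n p (l m)) ∈ Sjset n p l j := by
  rw [map_prod]
  exact Subalgebra.prod_mem _ fun m _ => pr_lf_mem_Sj n p l j (l m)

/-- The twisted-derivation value on the generator `y·l_j` stays in `S_j`. -/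
lemma dR_ylf_mem (j : Fin p) (u : Fin n → ℂ) :
    dR n p l u (pr n p l (yv n p * lf n p (l j))) ∈ Sjset n p l j := by
  classical
  have hins : ∀ k ∈ Finset.univ.erase j,
      (∏ m ∈ Finset.univ.erase k, lf n p (l m)) =
        lf n p (l j) * ∏ m ∈ (Finset.univ.erase k).erase j, lf n p (l m) := by
    intro k hk
    exact (Finset.mul_prod_erase _ _ (Finset.mem_erase.mpr
      ⟨(Finset.ne_of_mem_erase hk).symm, Finset.mem_univ j⟩)).symm
  have hH : lf n p (l j) * ∏ m ∈ Finset.univ.erase j, lf n p (l m) = Hp n p l := by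
    rw [Hp]
    exact Finset.mul_prod_erase Finset.univ (fun m => lf n p (l m)) (Finset.mem_univ j)
  have hsplit : dA n p l u (yv n p * lf n p (l j)) =
      MvPolynomial.C (ap u (l j)) * yv n p * (1 - yv n p * Hp n p l) -
      ∑ k ∈ Finset.univ.erase j, MvPolynomial.C (ap u (l k)) *
        ((yv n p * lf n p (l j)) * (yv n p * lf n p (l j)) *
          ∏ m ∈ (Finset.univ.erase k).erase j, lf n p (l m)) := by
    have hy : dA n p l u (yv n p) = -(yv n p) ^ 2 * d0 n p u (Hp n p l) := by
      simp [dA, d0_X, yv, smul_eq_mul]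
    have hd0H : d0 n p u (Hp n p l) =
        MvPolynomial.C (ap u (l j)) * ∏ m ∈ Finset.univ.erase j, lf n p (l m) +
        ∑ k ∈ Finset.univ.erase j, MvPolynomial.C (ap u (l k)) *
          (lf n p (l j) * ∏ m ∈ (Finset.univ.erase k).erase j, lf n p (l m)) := by
      rw [d0_Hp, ← Finset.add_sum_erase Finset.univ _ (Finset.mem_univ j)]
      congr 1
      apply Finset.sum_congr rfl
      intro k hk
      rw [hins k hk]
    have hsum : (∑ k ∈ Finset.univ.erase j, MvPolynomial.C (ap u (l k)) *
        ((yv n p * lf n p (l j)) * (yv n p * lf n p (l j)) *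
          ∏ m ∈ (Finset.univ.erase k).erase j, lf n p (l m))) =
        yv n p ^ 2 * lf n p (l j) *
          ∑ k ∈ Finset.univ.erase j, MvPolynomial.C (ap u (l k)) *
            (lf n p (l j) * ∏ m ∈ (Finset.univ.erase k).erase j, lf n p (l m)) := by
      rw [Finset.mul_sum]
      exact Finset.sum_congr rfl fun k _ => by ring
    rw [Derivation.leibniz, dA_lf, hy, hd0H, smul_eq_mul, smul_eq_mul, ← hH, hsum]
    ring
  have h0 : pr n p l (1 - yv n p * Hp n p l) = 0 := by
    rw [map_sub, map_one, pr_yH, sub_self]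
  rw [dR_pr, hsplit, map_sub, map_mul, h0, mul_zero, zero_sub]
  apply Subalgebra.neg_mem
  rw [map_sum]
  apply Subalgebra.sum_mem
  intro k _
  rw [map_mul, map_mul, map_mul]
  have hc : pr n p l (MvPolynomial.C (ap u (l k))) = algebraMap ℂ (Rm n p l) _ :=
    (pr n p l).commutes _
  exact Subalgebra.mul_mem _ (hc ▸ Subalgebra.algebraMap_mem _ _)
    (Subalgebra.mul_mem _
      (Subalgebra.mul_mem _ (pr_ylf_mem_Sj n p l j) (pr_ylf_mem_Sj n p l j))
      (pr_lfprod_mem_Sj n p l j _))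

lemma dR_Sj_mem (j : Fin p) (u : Fin n → ℂ) :
    ∀ a ∈ Sjset n p l j, dR n p l u a ∈ Sjset n p l j := by
  intro a ha
  induction ha using Algebra.adjoin_induction with
  | mem z hz =>
      rcases hz with (hz | hz) | hz
      · obtain ⟨i, rfl⟩ := hz
        rw [dR_pr, dA_xv]
        have hc : pr n p l (MvPolynomial.C (u i)) = algebraMap ℂ (Rm n p l) _ :=
          (pr n p l).commutes _
        exact hc ▸ Subalgebra.algebraMap_mem _ _
      · obtain ⟨k, rfl⟩ := hz
        rw [dR_pr, dA_sv, map_zero]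
        exact Subalgebra.zero_mem _
      · rw [Set.mem_singleton_iff] at hz
        rw [hz]
        exact dR_ylf_mem n p l j u
  | algebraMap r =>
      have : (algebraMap ℂ (Rm n p l) r) = pr n p l (MvPolynomial.C r) :=
        ((pr n p l).commutes r).symm
      rw [this, dR_pr, dA_C, map_zero]
      exact Subalgebra.zero_mem _
  | add x y hx hy ihx ihy =>
      rw [map_add]
      exact Subalgebra.add_mem _ ihx ihy
  | mul x y hx hy ihx ihy =>
      rw [dR_leibniz]
      exact Subalgebra.add_mem _ (Subalgebra.mul_mem _ ihx hy)
        (Subalgebra.mul_mem _ hx ihy)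
/-- Decomposition of `θ(u)·l_j` modulo the relation. -/
lemma pr_th_lf (j : Fin p) (u : Fin n → ℂ) :
    pr n p l (th n p l u * lf n p (l j)) =
      pr n p l (sv n p j) * algebraMap ℂ (Rm n p l) (ap u (l j)) +
      pr n p l (lf n p (l j)) *
        pr n p l (∑ k ∈ Finset.univ.erase j, sv n p k * MvPolynomial.C (ap u (l k)) *
          (yv n p * lf n p (l j)) * ∏ m ∈ (Finset.univ.erase k).erase j, lf n p (l m)) := by
  classical
  have hins : ∀ k ∈ Finset.univ.erase j,
      (∏ m ∈ Finset.univ.erase k, lf n p (l m)) =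
        lf n p (l j) * ∏ m ∈ (Finset.univ.erase k).erase j, lf n p (l m) := by
    intro k hk
    exact (Finset.mul_prod_erase _ _ (Finset.mem_erase.mpr
      ⟨(Finset.ne_of_mem_erase hk).symm, Finset.mem_univ j⟩)).symm
  have hH : lf n p (l j) * ∏ m ∈ Finset.univ.erase j, lf n p (l m) = Hp n p l := by
    rw [Hp]
    exact Finset.mul_prod_erase Finset.univ (fun m => lf n p (l m)) (Finset.mem_univ j)
  have hsplit : th n p l u * lf n p (l j) =
      sv n p j * MvPolynomial.C (ap u (l j)) * (yv n p * Hp n p l) +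
      lf n p (l j) * ∑ k ∈ Finset.univ.erase j, sv n p k * MvPolynomial.C (ap u (l k)) *
        (yv n p * lf n p (l j)) * ∏ m ∈ (Finset.univ.erase k).erase j, lf n p (l m) := by
    rw [th, Finset.sum_mul, ← Finset.add_sum_erase Finset.univ _ (Finset.mem_univ j)]
    congr 1
    · rw [← hH]; ring
    · rw [Finset.mul_sum]
      apply Finset.sum_congr rfl
      intro k hk
      rw [hins k hk]
      ring
  rw [hsplit, map_add, map_mul, map_mul, pr_yH, mul_one, map_mul]
  congr 2

lemma Nj_add (j : Fin p) {z w : Rm n p l} (hz : z ∈ Njset n p l j)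
    (hw : w ∈ Njset n p l j) : z + w ∈ Njset n p l j := by
  obtain ⟨r, a, ha, rfl⟩ := hz
  obtain ⟨r', a', ha', rfl⟩ := hw
  exact ⟨r + r', a + a', Subalgebra.add_mem _ ha ha', by ring⟩

lemma Nj_smul (j : Fin p) (c : ℂ) {z : Rm n p l} (hz : z ∈ Njset n p l j) :
    c • z ∈ Njset n p l j := by
  obtain ⟨r, a, ha, rfl⟩ := hz
  exact ⟨c • r, c • a, Subalgebra.smul_mem _ ha c, by
    rw [smul_add, mul_smul_comm, mul_smul_comm]⟩

lemma Nj_Sj_mul (j : Fin p) {w : Rm n p l} (hw : w ∈ Sjset n p l j)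
    {z : Rm n p l} (hz : z ∈ Njset n p l j) : w * z ∈ Njset n p l j := by
  obtain ⟨r, a, ha, rfl⟩ := hz
  exact ⟨w * r, w * a, Subalgebra.mul_mem _ hw ha, by ring⟩

lemma G_mem (j : Fin p) (u : Fin n → ℂ) :
    pr n p l (∑ k ∈ Finset.univ.erase j, sv n p k * MvPolynomial.C (ap u (l k)) *
        (yv n p * lf n p (l j)) * ∏ m ∈ (Finset.univ.erase k).erase j, lf n p (l m)) ∈
      Sjset n p l j := by
  rw [map_sum]
  apply Subalgebra.sum_mem
  intro k _
  rw [map_mul, map_mul, map_mul]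
  have hc : pr n p l (MvPolynomial.C (ap u (l k))) = algebraMap ℂ (Rm n p l) _ :=
    (pr n p l).commutes _
  exact Subalgebra.mul_mem _
    (Subalgebra.mul_mem _
      (Subalgebra.mul_mem _ (pr_sv_mem_Sj n p l j k) (hc ▸ Subalgebra.algebraMap_mem _ _))
      (pr_ylf_mem_Sj n p l j))
    (pr_lfprod_mem_Sj n p l j _)

lemma Nj_Top (j : Fin p) (u : Fin n → ℂ) {z : Rm n p l} (hz : z ∈ Njset n p l j) :
    Top n p l u z ∈ Njset n p l j := by
  classical
  obtain ⟨r, a, ha, rfl⟩ := hz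
  have hTop : ∀ w : Rm n p l, Top n p l u w = dR n p l u w + pr n p l (th n p l u) * w := by
    intro w
    rw [Top_eq, LinearMap.add_apply, Mop_apply]
  have h1 : Top n p l u (pr n p l (sv n p j + 1) * r) =
      pr n p l (sv n p j + 1) * (dR n p l u r + pr n p l (th n p l u) * r) := by
    rw [hTop, dR_leibniz]
    have hz : dR n p l u (pr n p l (sv n p j + 1)) = 0 := by
      rw [dR_pr, map_add, dA_sv, Derivation.map_one_eq_zero, add_zero, map_zero]
    rw [hz, zero_mul, zero_add]
    ring
  have h2 : Top n p l u (pr n p l (lf n p (l j)) * a) =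
      pr n p l (sv n p j + 1) * (algebraMap ℂ (Rm n p l) (ap u (l j)) * a) +
      pr n p l (lf n p (l j)) * (dR n p l u a +
        pr n p l (∑ k ∈ Finset.univ.erase j, sv n p k * MvPolynomial.C (ap u (l k)) *
          (yv n p * lf n p (l j)) *
          ∏ m ∈ (Finset.univ.erase k).erase j, lf n p (l m)) * a) := by
    rw [hTop, dR_leibniz]
    have hdlf : dR n p l u (pr n p l (lf n p (l j))) =
        algebraMap ℂ (Rm n p l) (ap u (l j)) := by
      rw [dR_pr, dA_lf]
      exact (pr n p l).commutes _
    have hth2 : pr n p l (th n p l u) * (pr n p l (lf n p (l j)) * a) =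
        (pr n p l (sv n p j) * algebraMap ℂ (Rm n p l) (ap u (l j)) +
          pr n p l (lf n p (l j)) *
            pr n p l (∑ k ∈ Finset.univ.erase j, sv n p k * MvPolynomial.C (ap u (l k)) *
              (yv n p * lf n p (l j)) *
              ∏ m ∈ (Finset.univ.erase k).erase j, lf n p (l m))) * a := by
      rw [← mul_assoc, ← map_mul, pr_th_lf]
    rw [hdlf, hth2, map_add, map_one]
    ring
  rw [map_add, h1, h2]
  refine ⟨(dR n p l u r + pr n p l (th n p l u) * r) +
      algebraMap ℂ (Rm n p l) (ap u (l j)) * a,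
    dR n p l u a +
      pr n p l (∑ k ∈ Finset.univ.erase j, sv n p k * MvPolynomial.C (ap u (l k)) *
        (yv n p * lf n p (l j)) *
        ∏ m ∈ (Finset.univ.erase k).erase j, lf n p (l m)) * a, ?_, by ring⟩
  exact Subalgebra.add_mem _ (dR_Sj_mem n p l j u a ha)
    (Subalgebra.mul_mem _ (G_mem n p l j u) ha)

lemma Nj_Dalg (j : Fin p) {P : Module.End ℂ (Rm n p l)} (hP : P ∈ Dalg n p l) :
    ∀ z ∈ Njset n p l j, P z ∈ Njset n p l j := by
  induction hP using Algebra.adjoin_induction with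
  | mem Q hQ =>
      rcases hQ with (hQ | hQ) | hQ
      · obtain ⟨i, rfl⟩ := hQ
        intro z hz
        rw [Mop_apply]
        exact Nj_Sj_mul n p l j (Algebra.subset_adjoin
          (Set.mem_union_left _ (Set.mem_union_left _ ⟨i, rfl⟩))) hz
      · obtain ⟨k, rfl⟩ := hQ
        intro z hz
        rw [Mop_apply]
        exact Nj_Sj_mul n p l j (pr_sv_mem_Sj n p l j k) hz
      · obtain ⟨i, rfl⟩ := hQ
        intro z hz
        exact Nj_Top n p l j _ hz
  | algebraMap r =>
      intro z hz
      rw [Module.algebraMap_end_apply]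
      exact Nj_smul n p l j r hz
  | add Q Q' hQ hQ' ihQ ihQ' =>
      intro z hz
      rw [LinearMap.add_apply]
      exact Nj_add n p l j (ihQ z hz) (ihQ' z hz)
  | mul Q Q' hQ hQ' ihQ ihQ' =>
      intro z hz
      rw [Module.End.mul_apply]
      exact ihQ _ (ihQ' z hz)

lemma pr_Hp_mem_Nj (j : Fin p) : pr n p l (Hp n p l) ∈ Njset n p l j := by
  classical
  have hH : lf n p (l j) * ∏ m ∈ Finset.univ.erase j, lf n p (l m) = Hp n p l := by
    rw [Hp]
    exact Finset.mul_prod_erase Finset.univ (fun m => lf n p (l m)) (Finset.mem_univ j)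
  exact ⟨0, pr n p l (∏ m ∈ Finset.univ.erase j, lf n p (l m)),
    pr_lfprod_mem_Sj n p l j _, by rw [mul_zero, zero_add, ← map_mul, hH]⟩
abbrev Ffield (p : ℕ) := FractionRing (MvPolynomial (Fin p) ℂ)
abbrev PSF (p : ℕ) := PowerSeries (Ffield p)
abbrev Kfield (p : ℕ) := FractionRing (PSF p)

noncomputable def cFh (p : ℕ) : ℂ →+* Ffield p :=
  (algebraMap (MvPolynomial (Fin p) ℂ) (Ffield p)).comp (MvPolynomial.C)

noncomputable def ePh (p : ℕ) : PSF p →+* Kfield p := algebraMap _ _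

noncomputable def Cps (p : ℕ) : Ffield p →+* PSF p := PowerSeries.C


/-- the power-series value of the linear form with coefficients `c`. -/
noncomputable def lps (ξ η : Fin n → ℂ) (c : Fin n → ℂ) : PSF p :=
  Cps p (cFh p (ap ξ c)) + PowerSeries.X * Cps p (cFh p (ap η c))

noncomputable def hps (j : Fin p) (ξ η : Fin n → ℂ) : PSF p :=
  ∏ m ∈ Finset.univ.erase j, lps n p ξ η (l m)

noncomputable def sσ (j : Fin p) (k : Fin p) : Ffield p :=
  if k = j then -1 else algebraMap (MvPolynomial (Fin p) ℂ) (Ffield p) (X k)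

noncomputable def ψ (j : Fin p) (ξ η : Fin n → ℂ) : A n p →+* Kfield p :=
  eval₂Hom ((ePh p).comp ((Cps p).comp (cFh p)))
    (fun o => Option.casesOn o ((ePh p (PowerSeries.X * hps n p l j ξ η))⁻¹)
      (fun w => Sum.casesOn w (fun i => ePh p (Cps p (cFh p (ξ i)) +
          PowerSeries.X * Cps p (cFh p (η i))))
        (fun k => ePh p (Cps p (sσ p j k)))))

lemma ψ_C (j : Fin p) (ξ η : Fin n → ℂ) (r : ℂ) :
    ψ n p l j ξ η (MvPolynomial.C r) = ePh p (Cps p (cFh p r)) := by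
  simp [ψ]

lemma ψ_xv (j : Fin p) (ξ η : Fin n → ℂ) (i : Fin n) :
    ψ n p l j ξ η (xv n p i) =
      ePh p (Cps p (cFh p (ξ i)) + PowerSeries.X * Cps p (cFh p (η i))) := by
  simp [ψ, xv]

lemma ψ_sv (j : Fin p) (ξ η : Fin n → ℂ) (k : Fin p) :
    ψ n p l j ξ η (sv n p k) = ePh p (Cps p (sσ p j k)) := by
  simp [ψ, sv]

lemma ψ_yv (j : Fin p) (ξ η : Fin n → ℂ) :
    ψ n p l j ξ η (yv n p) = (ePh p (PowerSeries.X * hps n p l j ξ η))⁻¹ := by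
  simp [ψ, yv]

lemma ψ_lf (j : Fin p) (ξ η : Fin n → ℂ) (c : Fin n → ℂ) :
    ψ n p l j ξ η (lf n p c) = ePh p (lps n p ξ η c) := by
  rw [lf, map_sum]
  have h1 : ∀ i, ψ n p l j ξ η (MvPolynomial.C (c i) * xv n p i) =
      ePh p (Cps p (cFh p (ξ i * c i)) +
        PowerSeries.X * Cps p (cFh p (η i * c i))) := by
    intro i
    rw [map_mul, ψ_C, ψ_xv, ← map_mul]
    congr 1
    rw [mul_add, ← map_mul, ← map_mul, mul_comm (ξ i) (c i), mul_left_comm, ← map_mul,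
      ← map_mul, mul_comm (η i) (c i)]
  rw [Finset.sum_congr rfl fun i _ => h1 i, ← map_sum, lps]
  congr 1
  rw [Finset.sum_add_distrib]
  congr 1
  · rw [ap, map_sum, map_sum]
  · rw [ap, map_sum, map_sum, Finset.mul_sum]

lemma ψ_Hp (j : Fin p) (ξ η : Fin n → ℂ)
    (hξj : ap ξ (l j) = 0) (hηj : ap η (l j) = 1) :
    ψ n p l j ξ η (Hp n p l) = ePh p (PowerSeries.X * hps n p l j ξ η) := by
  rw [Hp, map_prod]
  rw [Finset.prod_congr rfl fun m _ => ψ_lf n p l j ξ η (l m), ← map_prod]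
  congr 1
  rw [← Finset.mul_prod_erase Finset.univ _ (Finset.mem_univ j), ← hps]
  congr 1
  rw [lps, hξj, hηj]
  simp

lemma hps_unit (j : Fin p) (ξ η : Fin n → ℂ)
    (hξ : ∀ k, k ≠ j → ap ξ (l k) = 1) : IsUnit (hps n p l j ξ η) := by
  rw [PowerSeries.isUnit_iff_constantCoeff, hps, map_prod]
  apply isUnit_of_mul_isUnit_left (y := 1)
  rw [mul_one]
  have : ∀ m ∈ Finset.univ.erase j,
      PowerSeries.constantCoeff (lps n p ξ η (l m)) = 1 := by
    intro m hm
    rw [lps, hξ m (Finset.ne_of_mem_erase hm)]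
    simp
  rw [Finset.prod_congr rfl this, Finset.prod_const_one]
  exact isUnit_one

lemma hps_XH_ne (j : Fin p) (ξ η : Fin n → ℂ)
    (hξ : ∀ k, k ≠ j → ap ξ (l k) = 1) :
    ePh p (PowerSeries.X * hps n p l j ξ η) ≠ 0 := by
  have h1 : (PowerSeries.X * hps n p l j ξ η) ≠ 0 :=
    mul_ne_zero PowerSeries.X_ne_zero (hps_unit n p l j ξ η hξ).ne_zero
  intro h
  exact h1 (IsFractionRing.injective (PSF p) (Kfield p) (by rw [map_zero]; exact h))

lemma ψ_kills (j : Fin p) (ξ η : Fin n → ℂ)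
    (hξj : ap ξ (l j) = 0) (hηj : ap η (l j) = 1)
    (hξ : ∀ k, k ≠ j → ap ξ (l k) = 1) :
    ∀ a ∈ RI n p l, ψ n p l j ξ η a = 0 := by
  intro a ha
  rw [RI, Ideal.mem_span_singleton] at ha
  obtain ⟨t, rfl⟩ := ha
  rw [map_mul]
  have : ψ n p l j ξ η (yv n p * Hp n p l - 1) = 0 := by
    rw [map_sub, map_one, map_mul, ψ_yv, ψ_Hp n p l j ξ η hξj hηj]
    exact sub_eq_zero_of_eq (@inv_mul_cancel₀ (Kfield p) _ _ (hps_XH_ne n p l j ξ η hξ))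
  rw [this, zero_mul]
noncomputable def ψq (j : Fin p) (ξ η : Fin n → ℂ)
    (hξj : ap ξ (l j) = 0) (hηj : ap η (l j) = 1)
    (hξ : ∀ k, k ≠ j → ap ξ (l k) = 1) : Rm n p l →+* Kfield p :=
  Ideal.Quotient.lift (RI n p l) (ψ n p l j ξ η) (ψ_kills n p l j ξ η hξj hηj hξ)

lemma ψq_pr (j : Fin p) (ξ η : Fin n → ℂ)
    (hξj : ap ξ (l j) = 0) (hηj : ap η (l j) = 1)
    (hξ : ∀ k, k ≠ j → ap ξ (l k) = 1) (a : A n p) :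
    ψq n p l j ξ η hξj hηj hξ (pr n p l a) = ψ n p l j ξ η a := by
  rw [pr_apply, ψq, Ideal.Quotient.lift_mk]

lemma lps_j (j : Fin p) (ξ η : Fin n → ℂ)
    (hξj : ap ξ (l j) = 0) (hηj : ap η (l j) = 1) :
    lps n p ξ η (l j) = PowerSeries.X := by
  rw [lps, hξj, hηj]
  simp

lemma ψq_Sj (j : Fin p) (ξ η : Fin n → ℂ)
    (hξj : ap ξ (l j) = 0) (hηj : ap η (l j) = 1)
    (hξ : ∀ k, k ≠ j → ap ξ (l k) = 1) :
    ∀ a ∈ Sjset n p l j, ∃ w : PSF p, ψq n p l j ξ η hξj hηj hξ a = ePh p w := by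
  intro a ha
  induction ha using Algebra.adjoin_induction with
  | mem z hz =>
      rcases hz with (hz | hz) | hz
      · obtain ⟨i, rfl⟩ := hz
        exact ⟨_, by rw [ψq_pr, ψ_xv]⟩
      · obtain ⟨k, rfl⟩ := hz
        exact ⟨_, by rw [ψq_pr, ψ_sv]⟩
      · rw [Set.mem_singleton_iff] at hz
        subst hz
        obtain ⟨vu, hu⟩ := hps_unit n p l j ξ η hξ
        refine ⟨((vu⁻¹ : (PSF p)ˣ) : PSF p), ?_⟩
        have hwh : ((vu⁻¹ : (PSF p)ˣ) : PSF p) * hps n p l j ξ η = 1 := by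
          rw [← hu]
          exact Units.inv_mul vu
        rw [ψq_pr, map_mul, ψ_yv, ψ_lf, lps_j n p l j ξ η hξj hηj]
        have h2 : ePh p ((vu⁻¹ : (PSF p)ˣ) : PSF p) * ePh p (PowerSeries.X * hps n p l j ξ η) =
            ePh p PowerSeries.X := by
          rw [← map_mul]
          congr 1
          calc ((vu⁻¹ : (PSF p)ˣ) : PSF p) * (PowerSeries.X * hps n p l j ξ η)
              = PowerSeries.X * (((vu⁻¹ : (PSF p)ˣ) : PSF p) * hps n p l j ξ η) := by ring
            _ = PowerSeries.X := by rw [hwh, mul_one]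
        rw [← h2, mul_comm (ePh p ((vu⁻¹ : (PSF p)ˣ) : PSF p)) _, ← mul_assoc,
          @inv_mul_cancel₀ (Kfield p) _ _ (hps_XH_ne n p l j ξ η hξ), one_mul]
  | algebraMap r =>
      refine ⟨Cps p (cFh p r), ?_⟩
      have : (algebraMap ℂ (Rm n p l) r) = pr n p l (MvPolynomial.C r) :=
        ((pr n p l).commutes r).symm
      rw [this, ψq_pr, ψ_C]
  | add x y hx hy ihx ihy =>
      obtain ⟨w1, h1⟩ := ihx
      obtain ⟨w2, h2⟩ := ihy
      exact ⟨w1 + w2, by rw [map_add, h1, h2, map_add]⟩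
  | mul x y hx hy ihx ihy =>
      obtain ⟨w1, h1⟩ := ihx
      obtain ⟨w2, h2⟩ := ihy
      exact ⟨w1 * w2, by rw [map_mul, h1, h2, map_mul]⟩

noncomputable def sigA (p : ℕ) (j : Fin p) : Fin p → MvPolynomial (Fin p) ℂ :=
  fun k => if k = j then -1 else X k

lemma ψ_aeval (j : Fin p) (ξ η : Fin n → ℂ) (b : MvPolynomial (Fin p) ℂ) :
    ψ n p l j ξ η (aeval (sv n p) b) =
      ePh p (Cps p (algebraMap (MvPolynomial (Fin p) ℂ) (Ffield p) (aeval (sigA p j) b))) := by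
  have hext : (ψ n p l j ξ η).comp ((aeval (sv n p) :
        MvPolynomial (Fin p) ℂ →ₐ[ℂ] A n p) : MvPolynomial (Fin p) ℂ →+* A n p) =
      ((ePh p).comp ((Cps p).comp (algebraMap (MvPolynomial (Fin p) ℂ) (Ffield p)))).comp
        ((aeval (sigA p j) : MvPolynomial (Fin p) ℂ →ₐ[ℂ] MvPolynomial (Fin p) ℂ) :
          MvPolynomial (Fin p) ℂ →+* MvPolynomial (Fin p) ℂ) := by
    apply MvPolynomial.ringHom_ext
    · intro r
      simp only [RingHom.coe_comp, Function.comp_apply, AlgHom.coe_toRingHom]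
      rw [show ((aeval (sv n p)) (MvPolynomial.C r) : A n p) = MvPolynomial.C r by
          rw [aeval_C, MvPolynomial.algebraMap_eq],
        show ((aeval (sigA p j)) (MvPolynomial.C r) : MvPolynomial (Fin p) ℂ) =
          MvPolynomial.C r by rw [aeval_C, MvPolynomial.algebraMap_eq],
        ψ_C]
      rfl
    · intro k
      simp only [RingHom.coe_comp, Function.comp_apply, AlgHom.coe_toRingHom]
      rw [show ((aeval (sv n p)) (X k) : A n p) = sv n p k from aeval_X _ k,
        show ((aeval (sigA p j)) (X k) : MvPolynomial (Fin p) ℂ) = sigA p j k from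
          aeval_X _ k, ψ_sv]
      by_cases hk : k = j
      · rw [sigA, sσ, if_pos hk, if_pos hk]
        simp
      · rw [sigA, sσ, if_neg hk, if_neg hk]
  exact RingHom.congr_fun hext b

lemma hard_aeval (j : Fin p) (ξ η : Fin n → ℂ)
    (hξj : ap ξ (l j) = 0) (hηj : ap η (l j) = 1)
    (hξ : ∀ k, k ≠ j → ap ξ (l k) = 1) (b : MvPolynomial (Fin p) ℂ)
    (hmem : pr n p l (aeval (sv n p) b) ∈ Njset n p l j) :
    aeval (sigA p j) b = 0 := by
  obtain ⟨r, a, ha, heq⟩ := hmem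
  obtain ⟨w, hw⟩ := ψq_Sj n p l j ξ η hξj hηj hξ a ha
  have h1 : ψq n p l j ξ η hξj hηj hξ (pr n p l (sv n p j + 1)) = 0 := by
    rw [ψq_pr, map_add, map_one, ψ_sv, sσ, if_pos rfl, map_neg, map_one, map_neg, map_one,
      neg_add_cancel]
  have h2 : ψq n p l j ξ η hξj hηj hξ (pr n p l (lf n p (l j))) = ePh p PowerSeries.X := by
    rw [ψq_pr, ψ_lf, lps_j n p l j ξ η hξj hηj]
  have h3 := congrArg (ψq n p l j ξ η hξj hηj hξ) heq
  rw [map_add, map_mul, map_mul, h1, h2, zero_mul, zero_add, hw, ψq_pr, ψ_aeval,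
    ← map_mul] at h3
  have h4 := IsFractionRing.injective (PSF p) (Kfield p) h3
  have h5 := congrArg (PowerSeries.constantCoeff : PSF p →+* Ffield p) h4
  rw [Cps, map_mul, PowerSeries.constantCoeff_X, zero_mul, PowerSeries.constantCoeff_C] at h5
  exact IsFractionRing.injective (MvPolynomial (Fin p) ℂ) (Ffield p)
    (by rw [map_zero]; exact h5)
lemma sub_aeval_dvd (p : ℕ) (j : Fin p) (b : MvPolynomial (Fin p) ℂ) :
    (X j + 1 : MvPolynomial (Fin p) ℂ) ∣ (b - aeval (sigA p j) b) := by
  induction b using MvPolynomial.induction_on with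
  | C r =>
      rw [show ((aeval (sigA p j)) (MvPolynomial.C r) : MvPolynomial (Fin p) ℂ) =
        MvPolynomial.C r by rw [aeval_C, MvPolynomial.algebraMap_eq], sub_self]
      exact dvd_zero _
  | add f g hf hg =>
      have : f + g - aeval (sigA p j) (f + g) =
          (f - aeval (sigA p j) f) + (g - aeval (sigA p j) g) := by
        rw [map_add]; ring
      rw [this]
      exact dvd_add hf hg
  | mul_X q k hq =>
      rw [map_mul, aeval_X]
      by_cases hk : k = j
      · subst hk
        rw [sigA, if_pos rfl]
        have : q * X k - aeval (sigA p k) q * (-1) =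
            (q - aeval (sigA p k) q) * X k + aeval (sigA p k) q * (X k + 1) := by ring
        rw [this]
        exact dvd_add (hq.mul_right _) (dvd_mul_left _ _)
      · rw [sigA, if_neg hk]
        have : q * X k - aeval (sigA p j) q * X k = (q - aeval (sigA p j) q) * X k := by ring
        rw [this]
        exact hq.mul_right _

lemma dvd_of_aeval_zero (p : ℕ) (j : Fin p) (b : MvPolynomial (Fin p) ℂ)
    (h : aeval (sigA p j) b = 0) : (X j + 1 : MvPolynomial (Fin p) ℂ) ∣ b := by
  have := sub_aeval_dvd p j b
  rwa [h, sub_zero] at this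

lemma Xj1_ne_zero (p : ℕ) (j : Fin p) : (X j + 1 : MvPolynomial (Fin p) ℂ) ≠ 0 := by
  intro h
  have := congrArg (eval (fun _ => (0 : ℂ))) h
  simp at this

lemma prod_dvd (p : ℕ) (S : Finset (Fin p)) :
    ∀ b : MvPolynomial (Fin p) ℂ, (∀ j ∈ S, aeval (sigA p j) b = 0) →
      (∏ j ∈ S, (X j + 1 : MvPolynomial (Fin p) ℂ)) ∣ b := by
  classical
  induction S using Finset.induction_on with
  | empty => intro b _; rw [Finset.prod_empty]; exact one_dvd b
  | @insert j S hj ih =>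
      intro b hb
      obtain ⟨c, rfl⟩ := dvd_of_aeval_zero p j b (hb j (Finset.mem_insert_self j S))
      have hc : ∀ k ∈ S, aeval (sigA p k) c = 0 := by
        intro k hk
        have hkj : ¬ (j = k) := by rintro rfl; exact hj hk
        have h0 := hb k (Finset.mem_insert_of_mem hk)
        rw [map_mul, map_add, aeval_X, map_one, sigA, if_neg hkj] at h0
        rcases mul_eq_zero.mp h0 with h1 | h1
        · exact absurd h1 (Xj1_ne_zero p j)
        · exact h1
      rw [Finset.prod_insert hj]
      exact mul_dvd_mul_left _ (ih c hc)

/-- for `p ≤ n` and linearly independent linear forms `l₁,…,l_p` on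
`ℂⁿ`, the Bernstein ideal `ℬ(l₁,…,l_p)` is principal, generated by `∏ᵢ(sᵢ+1)`. -/
theorem stmt19 (n p : ℕ) (hp : p ≤ n) (l : Fin p → Fin n → ℂ)
    (hl : LinearIndependent ℂ l) (b : MvPolynomial (Fin p) ℂ) :
    (∃ P ∈ Dalg n p l,
        P (pr n p l (Hp n p l)) = pr n p l (MvPolynomial.aeval (sv n p) b)) ↔
      (∏ i, (MvPolynomial.X i + 1)) ∣ b := by
  classical
  constructor
  · rintro ⟨P, hP, hPe⟩
    refine prod_dvd p Finset.univ b ?_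
    intro j _
    obtain ⟨ξ, hξ0⟩ := exists_dual n p l hl (fun k => if k = j then 0 else 1)
    obtain ⟨η, hη0⟩ := exists_dual n p l hl (fun k => if k = j then 1 else 0)
    have hξj : ap ξ (l j) = 0 := by simpa using hξ0 j
    have hηj : ap η (l j) = 1 := by simpa using hη0 j
    have hξ1 : ∀ k, k ≠ j → ap ξ (l k) = 1 := fun k hk => by simpa [hk] using hξ0 k
    have hmem : pr n p l (aeval (sv n p) b) ∈ Njset n p l j := by
      rw [← hPe]
      exact Nj_Dalg n p l j hP _ (pr_Hp_mem_Nj n p l j)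
    exact hard_aeval n p l j ξ η hξj hηj hξ1 b hmem
  · rintro ⟨c, rfl⟩
    have hu : ∀ j : Fin p, ∃ u, ∀ k, ap u (l k) = if k = j then 1 else 0 := fun j =>
      exists_dual n p l hl (fun k => if k = j then 1 else 0)
    choose u huu using hu
    obtain ⟨P, hP, hPe⟩ := easy_ind n p l u huu Finset.univ
    rw [Finset.compl_univ, Finset.prod_empty, mul_one] at hPe
    refine ⟨Mop n p l (aeval (sv n p) c) * P,
      Subalgebra.mul_mem _ (Mop_aeval_mem n p l c) hP, ?_⟩
    rw [Module.End.mul_apply, hPe, Mop_apply, ← map_mul]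
    congr 1
    have hprod : (aeval (sv n p) (∏ i, (X i + 1 : MvPolynomial (Fin p) ℂ)) : A n p) = ∏ k, (sv n p k + 1) := by
      rw [map_prod]
      exact Finset.prod_congr rfl fun i _ => by rw [map_add, aeval_X, map_one]
    rw [map_mul, hprod, mul_comm]

end Paper
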